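/- Let n ≥ 1 be an integer and let f satisfy (A1), (A2), (A3). If (u,v) is a positive solution of the system −u''(r) − ((n−1)/r) u'(r) = f(r, u(r), v(r)) and −v''(r) − ((n−1)/r) v'(r) = f(r, v(r), u(r)) for r > 0, with u'(0) = v'(0) = 0 and u(r), v(r) → 0 as r → ∞, then u = v, and moreover there exists c > 0 such that u(r) + |u'(r)| ≤ c·e^{−√m·r} for all r > 0, where m is the positive constant from (A2). -/

import Mathlib

open Real Set Filter

/-- `u` is twice continuously differentiable on `[0,∞)`, with first and second
derivative functions `u'` and `u''`. -/
def C2 (u u' u'' : ℝ → ℝ) : Prop :=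
  (∀ r ∈ Set.Ici (0:ℝ), HasDerivWithinAt u (u' r) (Set.Ici 0) r) ∧
  (∀ r ∈ Set.Ici (0:ℝ), HasDerivWithinAt u' (u'' r) (Set.Ici 0) r) ∧
  ContinuousOn u'' (Set.Ici 0)

/-- Assumption (A1): `f : [0,∞)³ → ℝ` is continuous, locally Lipschitz on `(0,∞)³`,
and satisfies the stated growth bound. -/
def A1 (f : ℝ → ℝ → ℝ → ℝ) : Prop :=
  ContinuousOn (fun p : ℝ × ℝ × ℝ => f p.1 p.2.1 p.2.2)
    {p : ℝ × ℝ × ℝ | 0 ≤ p.1 ∧ 0 ≤ p.2.1 ∧ 0 ≤ p.2.2} ∧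
  (∀ p : ℝ × ℝ × ℝ, 0 < p.1 → 0 < p.2.1 → 0 < p.2.2 →
    ∃ K : NNReal, ∃ δ > 0, LipschitzOnWith K (fun p : ℝ × ℝ × ℝ => f p.1 p.2.1 p.2.2)
      (Metric.ball p δ ∩ {p : ℝ × ℝ × ℝ | 0 < p.1 ∧ 0 < p.2.1 ∧ 0 < p.2.2})) ∧
  (∃ p : ℝ, 1 < p ∧ ∃ C : ℝ, 0 < C ∧ ∀ r z₁ z₂ : ℝ, 0 ≤ r → 0 ≤ z₁ → 0 ≤ z₂ →
    |f r z₁ z₂| ≤ C * (|z₁| + |z₂| + |z₁| ^ p + |z₂| ^ p))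

/-- `(u,v)` (with derivative data) is a positive solution of the radial system
`-u'' - ((n-1)/r) u' = f(r,u,v)`, `-v'' - ((n-1)/r) v' = f(r,v,u)` on `(0,∞)`,
with `u'(0) = v'(0) = 0` and `u(r), v(r) → 0` as `r → ∞`. -/
def IsPosSol (n : ℕ) (f : ℝ → ℝ → ℝ → ℝ) (u u' u'' v v' v'' : ℝ → ℝ) : Prop :=
  C2 u u' u'' ∧ C2 v v' v'' ∧
  (∀ r : ℝ, 0 ≤ r → 0 < u r ∧ 0 < v r) ∧
  (∀ r : ℝ, 0 < r → -u'' r - ((n : ℝ) - 1) / r * u' r = f r (u r) (v r)) ∧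
  (∀ r : ℝ, 0 < r → -v'' r - ((n : ℝ) - 1) / r * v' r = f r (v r) (u r)) ∧
  u' 0 = 0 ∧ v' 0 = 0 ∧
  Tendsto u atTop (nhds 0) ∧ Tendsto v atTop (nhds 0)

open Topology

lemma no_local_max {h h' : ℝ → ℝ} {x δ h2x : ℝ} (hδ : 0 < δ)
    (hd : ∀ y ∈ Ioo (x - δ) (x + δ), HasDerivAt h (h' y) y)
    (hd2 : HasDerivAt h' h2x x)
    (hmax : IsLocalMax h x) (hpos : 0 < h2x) : False := by
  have hxmem : x ∈ Ioo (x - δ) (x + δ) := by constructor <;> linarith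
  have hx0 : h' x = 0 := hmax.hasDerivAt_eq_zero (hd x hxmem)
  have hs : Tendsto (slope h' x) (𝓝[≠] x) (𝓝 h2x) :=
    hasDerivAt_iff_tendsto_slope.1 hd2
  have hs' : Tendsto (slope h' x) (𝓝[>] x) (𝓝 h2x) :=
    hs.mono_left (nhdsWithin_mono _ (fun y hy => ne_of_gt hy))
  have hev : ∀ᶠ y in 𝓝[>] x, 0 < slope h' x y :=
    hs'.eventually (eventually_gt_nhds hpos)
  have hev2 : ∀ᶠ y in 𝓝[>] x, 0 < h' y := by
    filter_upwards [hev, self_mem_nhdsWithin] with y hy hy2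
    have hyx : (0:ℝ) < y - x := sub_pos.2 hy2
    rw [slope_def_field, hx0, sub_zero] at hy
    have := mul_pos hy hyx
    rwa [div_mul_cancel₀ _ (ne_of_gt hyx)] at this
  obtain ⟨t, ht, hsub⟩ := mem_nhdsGT_iff_exists_Ioo_subset.1 hev2
  -- h' > 0 on Ioo x t; pick c in (x, min t (x+δ))
  set c : ℝ := min t (x + δ) with hc
  have hxc : x < c := lt_min ht (by linarith)
  -- h is strictly larger at points of Ioo x c than at x, via MVT
  have key : ∀ y ∈ Ioo x c, h x < h y := by
    intro y hy
    have hyIoo : Icc x y ⊆ Ioo (x - δ) (x + δ) := by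
      intro z hz
      have : y < x + δ := lt_of_lt_of_le hy.2 (min_le_right _ _)
      constructor
      · linarith [hz.1]
      · linarith [hz.2]
    have hcont : ContinuousOn h (Icc x y) := fun z hz =>
      (hd z (hyIoo hz)).continuousAt.continuousWithinAt
    obtain ⟨ζ, hζ, hζeq⟩ := exists_hasDerivAt_eq_slope h h' hy.1 hcont
      (fun z hz => hd z (hyIoo ⟨le_of_lt hz.1, le_of_lt hz.2⟩))
    have hζpos : 0 < h' ζ := hsub ⟨hζ.1, lt_of_lt_of_le (lt_of_lt_of_le hζ.2 hy.2.le) (min_le_left _ _)⟩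
    rw [hζeq] at hζpos
    have hyx : (0:ℝ) < y - x := sub_pos.2 hy.1
    have := mul_pos hζpos hyx
    rw [div_mul_cancel₀ _ (ne_of_gt hyx)] at this
    linarith
  -- contradict local max
  have hloc : ∀ᶠ y in 𝓝[>] x, h y ≤ h x := (hmax.filter_mono nhdsWithin_le_nhds)
  have hmem : Ioo x c ∈ 𝓝[>] x := Ioo_mem_nhdsGT_of_mem ⟨le_refl x, hxc⟩
  obtain ⟨y, hy1, hy2⟩ := (hloc.and (eventually_of_mem hmem (fun y hy => hy))).exists
  exact absurd (key y hy2) (not_lt.2 hy1)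

lemma max_principle {h h' h'' c : ℝ → ℝ} {a mq : ℝ} (hmq : 0 < mq)
    (hcont : ContinuousOn h (Ici a))
    (hd : ∀ r, a < r → HasDerivAt h (h' r) r)
    (hd2 : ∀ r, a < r → HasDerivAt h' (h'' r) r)
    (hineq : ∀ r, a < r → mq * h r ≤ h'' r + c r * h' r)
    (hba : h a ≤ 0) (hlim : Tendsto h atTop (𝓝 0)) :
    ∀ r, a ≤ r → h r ≤ 0 := by
  by_contra hcon
  push_neg at hcon
  obtain ⟨x, hax, hx⟩ := hcon
  have hev : ∀ᶠ r in atTop, h r < h x := hlim.eventually (eventually_lt_nhds hx)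
  obtain ⟨M₀, hM₀⟩ := eventually_atTop.1 hev
  set M : ℝ := max M₀ (x + 1) with hM
  have hxM : x ≤ M := by
    have := le_max_right M₀ (x + 1); linarith
  have haM : a ≤ M := le_trans hax hxM
  have hMbig : ∀ y, M ≤ y → h y < h x := fun y hy => hM₀ y (le_trans (le_max_left _ _) hy)
  obtain ⟨r₀, hr₀mem, hr₀max⟩ := isCompact_Icc.exists_isMaxOn ⟨x, hax, hxM⟩
    (hcont.mono (Icc_subset_Ici_self))
  have hr₀x : h x ≤ h r₀ := hr₀max ⟨hax, hxM⟩
  have hr₀pos : 0 < h r₀ := lt_of_lt_of_le hx hr₀x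
  have har₀ : a < r₀ := by
    rcases eq_or_lt_of_le hr₀mem.1 with heq | hlt
    · exfalso; rw [heq] at hba; linarith
    · exact hlt
  have hglob : ∀ y, a < y → h y ≤ h r₀ := by
    intro y hy
    rcases le_or_gt y M with hyM | hyM
    · exact hr₀max ⟨le_of_lt hy, hyM⟩
    · exact le_trans (le_of_lt (hMbig y (le_of_lt hyM))) hr₀x
  have hmax : IsLocalMax h r₀ := by
    have : Ioi a ∈ 𝓝 r₀ := Ioi_mem_nhds har₀
    exact eventually_of_mem this (fun y hy => hglob y hy)
  have hz : h' r₀ = 0 := hmax.hasDerivAt_eq_zero (hd r₀ har₀)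
  have h2pos : 0 < h'' r₀ := by
    have := hineq r₀ har₀
    rw [hz] at this
    have := mul_pos hmq hr₀pos
    linarith
  exact no_local_max (show (0:ℝ) < r₀ - a by linarith)
    (fun y hy => hd y (by rcases hy with ⟨h1, _⟩; linarith))
    (hd2 r₀ har₀) hmax h2pos

lemma A2sum_ext {f : ℝ → ℝ → ℝ → ℝ} {m R ε : ℝ} (hm : 0 < m) (hε : 0 < ε)
    (hcont : ContinuousOn (fun p : ℝ × ℝ × ℝ => f p.1 p.2.1 p.2.2)
      {p : ℝ × ℝ × ℝ | 0 ≤ p.1 ∧ 0 ≤ p.2.1 ∧ 0 ≤ p.2.2})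
    (hR : 0 < R)
    (hA2 : ∀ r > R, ∀ z₁ ∈ Set.Ioo 0 ε, ∀ z₂ ∈ Set.Ioo 0 ε, z₁ ≠ z₂ →
      (f r z₁ z₂ + f r z₂ z₁) / (z₁ + z₂) ≤ -m) :
    ∀ r > R, ∀ z₁ ∈ Set.Ioo 0 ε, ∀ z₂ ∈ Set.Ioo 0 ε,
      f r z₁ z₂ + f r z₂ z₁ ≤ -m * (z₁ + z₂) := by
  intro r hr z₁ hz₁ z₂ hz₂
  rcases ne_or_eq z₁ z₂ with hne | heq
  · have h := hA2 r hr z₁ hz₁ z₂ hz₂ hne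
    have hpos : 0 < z₁ + z₂ := add_pos hz₁.1 hz₂.1
    rw [div_le_iff₀ hpos] at h
    linarith [h]
  · subst heq
    -- continuity argument: approach along t ↑ z₁
    set S : Set (ℝ × ℝ × ℝ) := {p : ℝ × ℝ × ℝ | 0 ≤ p.1 ∧ 0 ≤ p.2.1 ∧ 0 ≤ p.2.2} with hS
    have hmem : ((r, z₁, z₁) : ℝ × ℝ × ℝ) ∈ S := ⟨le_of_lt (lt_trans hR hr), hz₁.1.le, hz₁.1.le⟩
    have hg : Tendsto (fun t : ℝ => f r z₁ t + f r t z₁) (𝓝[Ioo 0 z₁] z₁)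
        (𝓝 (f r z₁ z₁ + f r z₁ z₁)) := by
      have hmap : MapsTo (fun t : ℝ => ((r, z₁, t) : ℝ × ℝ × ℝ)) (Ioo 0 z₁) S :=
        fun t ht => ⟨le_of_lt (lt_trans hR hr), hz₁.1.le, ht.1.le⟩
      have hmap2 : MapsTo (fun t : ℝ => ((r, t, z₁) : ℝ × ℝ × ℝ)) (Ioo 0 z₁) S :=
        fun t ht => ⟨le_of_lt (lt_trans hR hr), ht.1.le, hz₁.1.le⟩
      have hφ : Continuous (fun t : ℝ => ((r, z₁, t) : ℝ × ℝ × ℝ)) := by continuity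
      have hψ : Continuous (fun t : ℝ => ((r, t, z₁) : ℝ × ℝ × ℝ)) := by continuity
      have hc1' := ContinuousWithinAt.comp (f := fun t : ℝ => ((r, z₁, t) : ℝ × ℝ × ℝ))
        (x := z₁) (hcont.continuousWithinAt hmem) hφ.continuousWithinAt hmap
      have hc2' := ContinuousWithinAt.comp (f := fun t : ℝ => ((r, t, z₁) : ℝ × ℝ × ℝ))
        (x := z₁) (hcont.continuousWithinAt hmem) hψ.continuousWithinAt hmap2
      have hc1 : ContinuousWithinAt (fun t : ℝ => f r z₁ t) (Ioo 0 z₁) z₁ := hc1'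
      have hc2 : ContinuousWithinAt (fun t : ℝ => f r t z₁) (Ioo 0 z₁) z₁ := hc2'
      exact (hc1.add hc2)
    have hlin : Tendsto (fun t : ℝ => -m * (z₁ + t)) (𝓝[Ioo 0 z₁] z₁)
        (𝓝 (-m * (z₁ + z₁))) := by
      apply Tendsto.mono_left _ nhdsWithin_le_nhds
      exact (tendsto_const_nhds.mul ((tendsto_const_nhds.add tendsto_id)))
    have hNB : (𝓝[Ioo 0 z₁] z₁).NeBot := right_nhdsWithin_Ioo_neBot hz₁.1
    have hev : ∀ᶠ t in 𝓝[Ioo 0 z₁] z₁,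
        f r z₁ t + f r t z₁ ≤ -m * (z₁ + t) := by
      filter_upwards [self_mem_nhdsWithin] with t ht
      have htε : t ∈ Set.Ioo 0 ε := ⟨ht.1, lt_trans ht.2 hz₁.2⟩
      have hne : z₁ ≠ t := ne_of_gt ht.2
      have h := hA2 r hr z₁ hz₁ t htε hne
      have hpos : 0 < z₁ + t := add_pos hz₁.1 ht.1
      rw [div_le_iff₀ hpos] at h
      linarith
    have := le_of_tendsto_of_tendsto hg hlin hev
    linarith

lemma exp_decay_tendsto {b : ℝ} (hb : 0 < b) :
    Tendsto (fun r : ℝ => Real.exp (-b * r)) atTop (𝓝 0) := by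
  have h1 : Tendsto (fun r : ℝ => b * r) atTop atTop :=
    Tendsto.const_mul_atTop hb tendsto_id
  have h2 := Real.tendsto_exp_atBot.comp (tendsto_neg_atTop_atBot.comp h1)
  exact Filter.Tendsto.congr (fun r => by simp [Function.comp, neg_mul]) h2

lemma sum_decay {n : ℕ} {f : ℝ → ℝ → ℝ → ℝ} {m R ε : ℝ}
    (hn : 1 ≤ n) (hm : 0 < m) (hε : 0 < ε) (hR : 0 < R)
    (hA2' : ∀ r > R, ∀ z₁ ∈ Set.Ioo 0 ε, ∀ z₂ ∈ Set.Ioo 0 ε,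
      f r z₁ z₂ + f r z₂ z₁ ≤ -m * (z₁ + z₂))
    {u u' u'' v v' v'' : ℝ → ℝ}
    (hud : ∀ r ∈ Set.Ici (0:ℝ), HasDerivWithinAt u (u' r) (Set.Ici 0) r)
    (hud2 : ∀ r ∈ Set.Ici (0:ℝ), HasDerivWithinAt u' (u'' r) (Set.Ici 0) r)
    (hvd : ∀ r ∈ Set.Ici (0:ℝ), HasDerivWithinAt v (v' r) (Set.Ici 0) r)
    (hvd2 : ∀ r ∈ Set.Ici (0:ℝ), HasDerivWithinAt v' (v'' r) (Set.Ici 0) r)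
    (hpos : ∀ r : ℝ, 0 ≤ r → 0 < u r ∧ 0 < v r)
    (hequ : ∀ r : ℝ, 0 < r → -u'' r - ((n : ℝ) - 1) / r * u' r = f r (u r) (v r))
    (heqv : ∀ r : ℝ, 0 < r → -v'' r - ((n : ℝ) - 1) / r * v' r = f r (v r) (u r))
    (hlimu : Tendsto u atTop (𝓝 0)) (hlimv : Tendsto v atTop (𝓝 0)) :
    ∃ c > 0, ∀ r : ℝ, 0 ≤ r → u r + v r ≤ c * Real.exp (-Real.sqrt m * r) := by
  have hsm : 0 < Real.sqrt m := Real.sqrt_pos.2 hm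
  have hsm2 : Real.sqrt m * Real.sqrt m = m := Real.mul_self_sqrt hm.le
  -- continuity
  have hcu : ContinuousOn u (Ici 0) := fun r hr => (hud r hr).continuousWithinAt
  have hcv : ContinuousOn v (Ici 0) := fun r hr => (hvd r hr).continuousWithinAt
  -- derivatives as HasDerivAt on (0,∞)
  have hud' : ∀ r : ℝ, 0 < r → HasDerivAt u (u' r) r := fun r hr =>
    (hud r hr.le).hasDerivAt (Ici_mem_nhds hr)
  have hud2' : ∀ r : ℝ, 0 < r → HasDerivAt u' (u'' r) r := fun r hr =>
    (hud2 r hr.le).hasDerivAt (Ici_mem_nhds hr)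
  have hvd' : ∀ r : ℝ, 0 < r → HasDerivAt v (v' r) r := fun r hr =>
    (hvd r hr.le).hasDerivAt (Ici_mem_nhds hr)
  have hvd2' : ∀ r : ℝ, 0 < r → HasDerivAt v' (v'' r) r := fun r hr =>
    (hvd2 r hr.le).hasDerivAt (Ici_mem_nhds hr)
  -- choose R₁
  obtain ⟨M₁, hM₁⟩ := eventually_atTop.1 (hlimu.eventually (eventually_lt_nhds hε))
  obtain ⟨M₂, hM₂⟩ := eventually_atTop.1 (hlimv.eventually (eventually_lt_nhds hε))
  set R₁ : ℝ := max (max M₁ M₂) (R + 1) with hR₁def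
  have hR₁R : R < R₁ := by
    have := le_max_right (max M₁ M₂) (R + 1); linarith
  have hR₁0 : 0 < R₁ := lt_trans hR hR₁R
  have hsmallu : ∀ r, R₁ ≤ r → u r < ε := fun r hr =>
    hM₁ r (le_trans (le_trans (le_max_left M₁ M₂) (le_max_left _ _)) hr)
  have hsmallv : ∀ r, R₁ ≤ r → v r < ε := fun r hr =>
    hM₂ r (le_trans (le_trans (le_max_right M₁ M₂) (le_max_left _ _)) hr)
  set K : ℝ := (u R₁ + v R₁) * Real.exp (Real.sqrt m * R₁) with hKdef
  have hKpos : 0 < K := by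
    have h1 := (hpos R₁ hR₁0.le).1
    have h2 := (hpos R₁ hR₁0.le).2
    positivity
  -- the comparison function
  set g : ℝ → ℝ := fun r => K * Real.exp (-Real.sqrt m * r) with hgdef
  set h : ℝ → ℝ := fun r => u r + v r - g r with hhdef
  set h1 : ℝ → ℝ := fun r => u' r + v' r + Real.sqrt m * g r with hh1def
  set h2 : ℝ → ℝ := fun r => u'' r + v'' r - m * g r with hh2def
  have hgd : ∀ r : ℝ, HasDerivAt g (-Real.sqrt m * g r) r := by
    intro r
    have hlin : HasDerivAt (fun x : ℝ => -Real.sqrt m * x) (-Real.sqrt m) r := by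
      simpa using (hasDerivAt_id r).const_mul (-Real.sqrt m)
    have hK := (hlin.exp).const_mul K
    have e : -Real.sqrt m * g r = K * (Real.exp (-Real.sqrt m * r) * -Real.sqrt m) := by
      show -Real.sqrt m * (K * Real.exp (-Real.sqrt m * r)) = _
      ring
    rw [e]; exact hK
  have hhd : ∀ r : ℝ, 0 < r → HasDerivAt h (h1 r) r := by
    intro r hr
    have := ((hud' r hr).add (hvd' r hr)).sub (hgd r)
    have e : h1 r = u' r + v' r - -Real.sqrt m * g r := by
      show u' r + v' r + Real.sqrt m * g r = _
      ring
    rw [e]; exact this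
  have hhd2 : ∀ r : ℝ, 0 < r → HasDerivAt h1 (h2 r) r := by
    intro r hr
    have := ((hud2' r hr).add (hvd2' r hr)).add ((hgd r).const_mul (Real.sqrt m))
    have heq : u'' r + v'' r + Real.sqrt m * (-Real.sqrt m * g r) = h2 r := by
      simp only [hh2def]
      rw [show Real.sqrt m * (-Real.sqrt m * g r) = -(Real.sqrt m * Real.sqrt m) * g r by ring,
        hsm2]
      ring
    rw [heq] at this
    exact this
  -- differential inequality
  have hineq : ∀ r, R₁ < r → m * h r ≤ h2 r + (((n:ℝ) - 1) / r) * h1 r := by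
    intro r hr
    have hr0 : 0 < r := lt_trans hR₁0 hr
    have hcr : 0 ≤ ((n:ℝ) - 1) / r := by
      apply div_nonneg _ hr0.le
      have : (1:ℝ) ≤ (n:ℝ) := by exact_mod_cast hn
      linarith
    have hA2r := hA2' r (lt_trans hR₁R hr) (u r) ⟨(hpos r hr0.le).1, hsmallu r hr.le⟩
      (v r) ⟨(hpos r hr0.le).2, hsmallv r hr.le⟩
    have hu := hequ r hr0
    have hv := heqv r hr0
    have hgpos : 0 < g r := by positivity
    have hterm : 0 ≤ (((n:ℝ) - 1) / r) * (Real.sqrt m * g r) := by positivity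
    simp only [hhdef, hh1def, hh2def]
    nlinarith [hA2r, hu, hv]
  -- boundary value
  have hbdry : h R₁ = 0 := by
    simp only [hhdef, hgdef, hKdef]
    rw [mul_assoc, ← Real.exp_add]
    ring_nf
    simp
  -- limit
  have hgl : Tendsto g atTop (𝓝 0) := by
    have := (exp_decay_tendsto hsm).const_mul K
    simpa [hgdef, mul_zero] using this
  have hhl : Tendsto h atTop (𝓝 0) := by
    have := (hlimu.add hlimv).sub hgl
    simpa [hhdef] using this
  -- continuity of h on [R₁, ∞)
  have hhc : ContinuousOn h (Ici R₁) := by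
    apply ContinuousOn.sub
    · exact (hcu.mono (Ici_subset_Ici.2 hR₁0.le)).add (hcv.mono (Ici_subset_Ici.2 hR₁0.le))
    · exact (continuous_const.mul
        (Real.continuous_exp.comp (continuous_const.mul continuous_id))).continuousOn
  have hmain : ∀ r, R₁ ≤ r → h r ≤ 0 :=
    max_principle hm hhc (fun r hr => hhd r (lt_trans hR₁0 hr))
      (fun r hr => hhd2 r (lt_trans hR₁0 hr)) hineq (le_of_eq hbdry) hhl
  -- bound on [0, R₁]
  obtain ⟨r₂, hr₂mem, hr₂max⟩ := isCompact_Icc.exists_isMaxOn (by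
      exact ⟨0, le_refl (0:ℝ), hR₁0.le⟩ : (Icc (0:ℝ) R₁).Nonempty)
    ((hcu.add hcv).mono (Icc_subset_Ici_self))
  set B : ℝ := u r₂ + v r₂ with hBdef
  have hBpos : 0 < B := by
    have := hpos r₂ hr₂mem.1
    simp only [hBdef]; linarith [this.1, this.2]
  refine ⟨max K (B * Real.exp (Real.sqrt m * R₁)), by positivity, ?_⟩
  intro r hr
  rcases le_or_gt R₁ r with hcase | hcase
  · have := hmain r hcase
    have : u r + v r ≤ K * Real.exp (-Real.sqrt m * r) := by
      simp only [hhdef, hgdef] at this; linarith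
    calc u r + v r ≤ K * Real.exp (-Real.sqrt m * r) := this
      _ ≤ max K (B * Real.exp (Real.sqrt m * R₁)) * Real.exp (-Real.sqrt m * r) := by
          apply mul_le_mul_of_nonneg_right (le_max_left _ _) (Real.exp_nonneg _)
  · have hmem : r ∈ Icc (0:ℝ) R₁ := ⟨hr, hcase.le⟩
    have hB : u r + v r ≤ B := hr₂max hmem
    have hexp : B ≤ B * Real.exp (Real.sqrt m * R₁) * Real.exp (-Real.sqrt m * r) := by
      rw [mul_assoc, ← Real.exp_add]
      nth_rewrite 1 [← mul_one B]
      apply mul_le_mul_of_nonneg_left _ hBpos.le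
      rw [show Real.sqrt m * R₁ + -Real.sqrt m * r = Real.sqrt m * (R₁ - r) by ring]
      apply Real.one_le_exp
      have : 0 ≤ R₁ - r := by linarith
      positivity
    calc u r + v r ≤ B := hB
      _ ≤ B * Real.exp (Real.sqrt m * R₁) * Real.exp (-Real.sqrt m * r) := hexp
      _ ≤ max K (B * Real.exp (Real.sqrt m * R₁)) * Real.exp (-Real.sqrt m * r) := by
          apply mul_le_mul_of_nonneg_right (le_max_right _ _) (Real.exp_nonneg _)

lemma pow_aux {n : ℕ} (hn : 1 ≤ n) {r : ℝ} (hr : 0 < r) :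
    ((n - 1 : ℕ) : ℝ) * r ^ (n - 1 - 1) = ((n:ℝ) - 1) / r * r ^ (n - 1) := by
  obtain ⟨k, rfl⟩ : ∃ k, n = k + 1 := ⟨n - 1, (Nat.succ_pred_eq_of_pos hn).symm⟩
  cases k with
  | zero => simp
  | succ j =>
    have h1 : j + 1 + 1 - 1 = j + 1 := rfl
    have h2 : j + 1 - 1 = j := rfl
    rw [h1, h2, pow_succ]
    have : ((j + 1 + 1 : ℕ) : ℝ) - 1 = (j + 1 : ℕ) := by push_cast; ring
    rw [this]
    field_simp

set_option maxHeartbeats 1000000 in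
lemma deriv_decay {n : ℕ} {f : ℝ → ℝ → ℝ → ℝ} {m c₁ p C : ℝ}
    (hn : 1 ≤ n) (hm : 0 < m) (hc₁ : 0 < c₁) (hp : 1 < p) (hC : 0 < C)
    (hgrow : ∀ r z₁ z₂ : ℝ, 0 ≤ r → 0 ≤ z₁ → 0 ≤ z₂ →
      |f r z₁ z₂| ≤ C * (|z₁| + |z₂| + |z₁| ^ p + |z₂| ^ p))
    {u u' u'' v : ℝ → ℝ}
    (hud : ∀ r ∈ Set.Ici (0:ℝ), HasDerivWithinAt u (u' r) (Set.Ici 0) r)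
    (hud2 : ∀ r ∈ Set.Ici (0:ℝ), HasDerivWithinAt u' (u'' r) (Set.Ici 0) r)
    (hpos : ∀ r : ℝ, 0 ≤ r → 0 < u r ∧ 0 < v r)
    (hequ : ∀ r : ℝ, 0 < r → -u'' r - ((n : ℝ) - 1) / r * u' r = f r (u r) (v r))
    (huv : ∀ r : ℝ, 0 ≤ r → u r + v r ≤ c₁ * Real.exp (-Real.sqrt m * r)) :
    ∃ c > 0, ∀ r : ℝ, 0 < r → |u' r| ≤ c * Real.exp (-Real.sqrt m * r) := by
  have hsm : 0 < Real.sqrt m := Real.sqrt_pos.2 hm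
  have hcu : ContinuousOn u (Ici 0) := fun r hr => (hud r hr).continuousWithinAt
  have hcu' : ContinuousOn u' (Ici 0) := fun r hr => (hud2 r hr).continuousWithinAt
  have hud' : ∀ r : ℝ, 0 < r → HasDerivAt u (u' r) r := fun r hr =>
    (hud r hr.le).hasDerivAt (Ici_mem_nhds hr)
  have hud2' : ∀ r : ℝ, 0 < r → HasDerivAt u' (u'' r) r := fun r hr =>
    (hud2 r hr.le).hasDerivAt (Ici_mem_nhds hr)
  -- individual decay bounds
  have hub : ∀ r : ℝ, 0 ≤ r → u r ≤ c₁ * Real.exp (-Real.sqrt m * r) := by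
    intro r hr
    have := huv r hr
    have := (hpos r hr).2
    linarith
  have hvb : ∀ r : ℝ, 0 ≤ r → v r ≤ c₁ * Real.exp (-Real.sqrt m * r) := by
    intro r hr
    have := huv r hr
    have := (hpos r hr).1
    linarith
  obtain ⟨M, hMdef⟩ : ∃ M : ℝ, M = max c₁ 1 := ⟨_, rfl⟩
  have hM1 : 1 ≤ M := hMdef ▸ le_max_right _ _
  have hM0 : 0 < M := lt_of_lt_of_le one_pos hM1
  have hMb : ∀ r : ℝ, 0 ≤ r → u r ≤ M ∧ v r ≤ M := by
    intro r hr
    have hexp : Real.exp (-Real.sqrt m * r) ≤ 1 := by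
      apply Real.exp_le_one_iff.2
      have : 0 ≤ Real.sqrt m * r := by positivity
      linarith
    have h1 := hub r hr
    have h2 := hvb r hr
    have hcM : c₁ ≤ M := hMdef ▸ le_max_left _ _
    constructor
    · nlinarith [Real.exp_pos (-Real.sqrt m * r)]
    · nlinarith [Real.exp_pos (-Real.sqrt m * r)]
  -- pointwise bound on f along the solution
  obtain ⟨C₂, hC₂def⟩ : ∃ c : ℝ, c = C * (1 + M ^ (p - 1)) * c₁ := ⟨_, rfl⟩
  have hMp : (0:ℝ) < M ^ (p-1) := Real.rpow_pos_of_pos hM0 _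
  have hC₂pos : 0 < C₂ := by rw [hC₂def]; positivity
  have hfb : ∀ r : ℝ, 0 ≤ r → |f r (u r) (v r)| ≤ C₂ * Real.exp (-Real.sqrt m * r) := by
    intro r hr
    obtain ⟨hu0, hv0⟩ := hpos r hr
    have hg := hgrow r (u r) (v r) hr hu0.le hv0.le
    rw [abs_of_pos hu0, abs_of_pos hv0] at hg
    have hup : u r ^ p ≤ M ^ (p - 1) * u r := by
      have h1 : u r ^ p = u r ^ (p - 1) * u r := by
        nth_rewrite 1 [show p = (p - 1) + 1 by ring]
        rw [Real.rpow_add hu0, Real.rpow_one]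
      rw [h1]
      apply mul_le_mul_of_nonneg_right _ hu0.le
      exact Real.rpow_le_rpow hu0.le ((hMb r hr).1) (by linarith)
    have hvp : v r ^ p ≤ M ^ (p - 1) * v r := by
      have h1 : v r ^ p = v r ^ (p - 1) * v r := by
        nth_rewrite 1 [show p = (p - 1) + 1 by ring]
        rw [Real.rpow_add hv0, Real.rpow_one]
      rw [h1]
      apply mul_le_mul_of_nonneg_right _ hv0.le
      exact Real.rpow_le_rpow hv0.le ((hMb r hr).2) (by linarith)
    have huvb := huv r hr
    calc |f r (u r) (v r)| ≤ C * (u r + v r + u r ^ p + v r ^ p) := hg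
      _ ≤ C * ((1 + M ^ (p-1)) * (u r + v r)) := by nlinarith
      _ ≤ C * ((1 + M ^ (p-1)) * (c₁ * Real.exp (-Real.sqrt m * r))) := by
          apply mul_le_mul_of_nonneg_left _ hC.le
          apply mul_le_mul_of_nonneg_left huvb (by positivity)
      _ = C₂ * Real.exp (-Real.sqrt m * r) := by rw [hC₂def]; ring
  -- the function P and its derivative
  obtain ⟨P, hPdef⟩ : ∃ P : ℝ → ℝ, P = fun r => r ^ (n - 1) * u' r := ⟨_, rfl⟩
  have hPd : ∀ r : ℝ, 0 < r →
      HasDerivAt P (-(r ^ (n - 1) * f r (u r) (v r))) r := by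
    intro r hr
    rw [hPdef]
    have h1 := (hasDerivAt_pow (n - 1) r).mul (hud2' r hr)
    have heq : ((n - 1 : ℕ) : ℝ) * r ^ (n - 1 - 1) * u' r + r ^ (n - 1) * u'' r
        = -(r ^ (n - 1) * f r (u r) (v r)) := by
      rw [pow_aux hn hr]
      have := hequ r hr
      have hfr : f r (u r) (v r) = -u'' r - ((n : ℝ) - 1) / r * u' r := this.symm
      rw [hfr]
      ring
    have h2 : HasDerivAt (fun y : ℝ => y ^ (n - 1) * u' y)
        (((n - 1 : ℕ) : ℝ) * r ^ (n - 1 - 1) * u' r + r ^ (n - 1) * u'' r) r := h1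
    rw [heq] at h2
    exact h2
  -- main estimate for r ≥ 2
  have hmain : ∀ r : ℝ, 2 ≤ r →
      |u' r| ≤ (2 * c₁ + C₂) * Real.exp (Real.sqrt m) * Real.exp (-Real.sqrt m * r) := by
    intro r hr
    have hr0 : (0:ℝ) < r := by linarith
    have hr1 : (0:ℝ) < r - 1 := by linarith
    -- MVT
    have hcont : ContinuousOn u (Icc (r - 1) r) :=
      hcu.mono (fun x hx => le_trans hr1.le hx.1)
    obtain ⟨ξ, hξmem, hξeq⟩ := exists_hasDerivAt_eq_slope u u' (by linarith : r - 1 < r)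
      hcont (fun x hx => hud' x (lt_trans hr1 hx.1))
    have hξ0 : 0 < ξ := lt_trans hr1 hξmem.1
    have hξr : ξ ≤ r := hξmem.2.le
    have hslope : u' ξ = u r - u (r - 1) := by
      rw [hξeq]; norm_num
    have hexpmono : Real.exp (-Real.sqrt m * r) ≤ Real.exp (-Real.sqrt m * (r - 1)) := by
      apply Real.exp_le_exp.2
      nlinarith
    have huξ : |u' ξ| ≤ 2 * c₁ * Real.exp (-Real.sqrt m * (r - 1)) := by
      rw [hslope]
      have h1 := hub r hr0.le
      have h2 := hub (r - 1) hr1.le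
      have h3 := (hpos r hr0.le).1
      have h4 := (hpos (r - 1) hr1.le).1
      rw [abs_sub_le_iff]
      constructor <;> nlinarith
    -- bound |P ξ|
    have hPξ : |P ξ| ≤ r ^ (n - 1) * (2 * c₁ * Real.exp (-Real.sqrt m * (r - 1))) := by
      rw [hPdef]
      simp only
      rw [abs_mul, abs_of_nonneg (by positivity : (0:ℝ) ≤ ξ ^ (n - 1))]
      apply mul_le_mul (pow_le_pow_left₀ hξ0.le hξr _) huξ (abs_nonneg _) (by positivity)
    -- mean value inequality for P on [ξ, r] ⊆ [r-1, r]
    obtain ⟨D, hDdef⟩ : ∃ D : ℝ, D = r ^ (n - 1) * C₂ * Real.exp (-Real.sqrt m * (r - 1)) :=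
      ⟨_, rfl⟩
    have hPP : ∀ x ∈ Icc (r - 1) r,
        HasDerivWithinAt P (-(x ^ (n - 1) * f x (u x) (v x))) (Icc (r - 1) r) x :=
      fun x hx => (hPd x (lt_of_lt_of_le hr1 hx.1)).hasDerivWithinAt
    have hbound : ∀ x ∈ Icc (r - 1) r, ‖-(x ^ (n - 1) * f x (u x) (v x))‖ ≤ D := by
      intro x hx
      have hx0 : (0:ℝ) < x := lt_of_lt_of_le hr1 hx.1
      rw [norm_neg, Real.norm_eq_abs, abs_mul,
        abs_of_nonneg (by positivity : (0:ℝ) ≤ x ^ (n - 1))]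
      have h1 : x ^ (n - 1) ≤ r ^ (n - 1) := pow_le_pow_left₀ hx0.le hx.2 _
      have h2 := hfb x hx0.le
      have h3 : Real.exp (-Real.sqrt m * x) ≤ Real.exp (-Real.sqrt m * (r - 1)) := by
        apply Real.exp_le_exp.2
        nlinarith [hx.1]
      rw [hDdef]
      calc x ^ (n-1) * |f x (u x) (v x)| ≤ r ^ (n-1) * (C₂ * Real.exp (-Real.sqrt m * x)) := by
            apply mul_le_mul h1 (le_trans h2 (by nlinarith)) (abs_nonneg _) (by positivity)
        _ ≤ r ^ (n-1) * (C₂ * Real.exp (-Real.sqrt m * (r-1))) := by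
            apply mul_le_mul_of_nonneg_left _ (by positivity)
            exact mul_le_mul_of_nonneg_left h3 hC₂pos.le
        _ = r ^ (n-1) * C₂ * Real.exp (-Real.sqrt m * (r-1)) := by ring
    have hmvi := (convex_Icc (r - 1) r).norm_image_sub_le_of_norm_hasDerivWithin_le
      hPP hbound (⟨hξmem.1.le, hξmem.2.le⟩ : ξ ∈ Icc (r-1) r) (⟨by linarith, le_refl r⟩ : r ∈ Icc (r-1) r)
    have hrξ : ‖r - ξ‖ ≤ 1 := by
      rw [Real.norm_eq_abs, abs_of_nonneg (by linarith : (0:ℝ) ≤ r - ξ)]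
      linarith [hξmem.1]
    have hDpos : 0 ≤ D := by rw [hDdef]; positivity
    have hPr : |P r| ≤ r ^ (n - 1) * ((2 * c₁ + C₂) * Real.exp (-Real.sqrt m * (r - 1))) := by
      have h1 : |P r - P ξ| ≤ D := by
        calc |P r - P ξ| = ‖P r - P ξ‖ := (Real.norm_eq_abs _).symm
          _ ≤ D * ‖r - ξ‖ := hmvi
          _ ≤ D * 1 := mul_le_mul_of_nonneg_left hrξ hDpos
          _ = D := mul_one D
      have h2 : |P r| ≤ |P ξ| + D := by
        have := abs_sub_abs_le_abs_sub (P r) (P ξ)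
        linarith
      rw [hDdef] at h2
      calc |P r| ≤ |P ξ| + r ^ (n-1) * C₂ * Real.exp (-Real.sqrt m * (r-1)) := h2
        _ ≤ r ^ (n-1) * (2 * c₁ * Real.exp (-Real.sqrt m * (r-1)))
            + r ^ (n-1) * C₂ * Real.exp (-Real.sqrt m * (r-1)) := by linarith [hPξ]
        _ = r ^ (n-1) * ((2 * c₁ + C₂) * Real.exp (-Real.sqrt m * (r-1))) := by ring
    -- conclude for u'
    have hrpow : (0:ℝ) < r ^ (n - 1) := by positivity
    have hPu : |P r| = r ^ (n - 1) * |u' r| := by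
      rw [hPdef]
      simp only
      rw [abs_mul, abs_of_nonneg hrpow.le]
    apply le_of_mul_le_mul_left _ hrpow
    rw [← hPu]
    calc |P r| ≤ r ^ (n-1) * ((2 * c₁ + C₂) * Real.exp (-Real.sqrt m * (r-1))) := hPr
      _ = r ^ (n-1) * ((2 * c₁ + C₂) * Real.exp (Real.sqrt m) * Real.exp (-Real.sqrt m * r)) := by
          rw [show -Real.sqrt m * (r - 1) = Real.sqrt m + -Real.sqrt m * r by ring,
            Real.exp_add]
          ring
  -- bound on (0, 2]
  obtain ⟨B₂, hB₂⟩ := (isCompact_Icc (a := (0:ℝ)) (b := 2)).exists_bound_of_continuousOn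
    (hcu'.mono (fun x hx => hx.1))
  obtain ⟨B₃, hB₃def⟩ : ∃ B : ℝ, B = (max B₂ 1) * Real.exp (2 * Real.sqrt m) := ⟨_, rfl⟩
  have hB₃pos : 0 < B₃ := by
    rw [hB₃def]
    have : (0:ℝ) < max B₂ 1 := lt_of_lt_of_le one_pos (le_max_right _ _)
    positivity
  refine ⟨max ((2 * c₁ + C₂) * Real.exp (Real.sqrt m)) B₃,
    lt_max_iff.2 (Or.inr hB₃pos), ?_⟩
  intro r hr
  rcases le_or_gt 2 r with hcase | hcase
  · calc |u' r| ≤ (2 * c₁ + C₂) * Real.exp (Real.sqrt m) * Real.exp (-Real.sqrt m * r) :=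
        hmain r hcase
      _ ≤ _ := mul_le_mul_of_nonneg_right (le_max_left _ _) (Real.exp_nonneg _)
  · have hmem : r ∈ Icc (0:ℝ) 2 := ⟨hr.le, hcase.le⟩
    have h1 : |u' r| ≤ B₂ := by
      have := hB₂ r hmem
      rwa [Real.norm_eq_abs] at this
    have h2 : B₂ ≤ B₃ * Real.exp (-Real.sqrt m * r) := by
      rw [hB₃def, mul_assoc, ← Real.exp_add]
      have h3 : 1 ≤ Real.exp (2 * Real.sqrt m + -Real.sqrt m * r) := by
        apply Real.one_le_exp
        nlinarith
      nlinarith [le_max_left B₂ (1:ℝ), le_max_right B₂ (1:ℝ),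
        Real.exp_pos (2 * Real.sqrt m + -Real.sqrt m * r)]
    calc |u' r| ≤ B₂ := h1
      _ ≤ B₃ * Real.exp (-Real.sqrt m * r) := h2
      _ ≤ _ := mul_le_mul_of_nonneg_right (le_max_right _ _) (Real.exp_nonneg _)

lemma poly_exp_decay (k : ℕ) {b : ℝ} (hb : 0 < b) :
    Tendsto (fun r : ℝ => r ^ k * Real.exp (-b * r)) atTop (𝓝 0) := by
  have h1 : Tendsto (fun r : ℝ => b * r) atTop atTop :=
    Tendsto.const_mul_atTop hb tendsto_id
  have h2 := (tendsto_pow_mul_exp_neg_atTop_nhds_zero k).comp h1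
  have h3 := h2.const_mul (1 / b ^ k)
  rw [mul_zero] at h3
  apply h3.congr
  intro r
  simp only [Function.comp_apply]
  rw [mul_pow]
  have hbk : (0:ℝ) < b ^ k := by positivity
  field_simp

set_option maxHeartbeats 1000000 in
lemma no_cross {n : ℕ} {f : ℝ → ℝ → ℝ → ℝ} {m c₁ c₄ : ℝ}
    (hn : 1 ≤ n) (hm : 0 < m) (hc₁ : 0 < c₁) (hc₄ : 0 < c₄)
    (hA3 : ∀ r > (0:ℝ), ∀ z₁ z₂ : ℝ, 0 < z₂ → z₂ < z₁ →
      f r z₁ z₂ * z₂ < f r z₂ z₁ * z₁)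
    {u u' u'' v v' v'' : ℝ → ℝ}
    (hud : ∀ r ∈ Set.Ici (0:ℝ), HasDerivWithinAt u (u' r) (Set.Ici 0) r)
    (hud2 : ∀ r ∈ Set.Ici (0:ℝ), HasDerivWithinAt u' (u'' r) (Set.Ici 0) r)
    (hvd : ∀ r ∈ Set.Ici (0:ℝ), HasDerivWithinAt v (v' r) (Set.Ici 0) r)
    (hvd2 : ∀ r ∈ Set.Ici (0:ℝ), HasDerivWithinAt v' (v'' r) (Set.Ici 0) r)
    (hpos : ∀ r : ℝ, 0 ≤ r → 0 < u r ∧ 0 < v r)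
    (hequ : ∀ r : ℝ, 0 < r → -u'' r - ((n : ℝ) - 1) / r * u' r = f r (u r) (v r))
    (heqv : ∀ r : ℝ, 0 < r → -v'' r - ((n : ℝ) - 1) / r * v' r = f r (v r) (u r))
    (hu'0 : u' 0 = 0) (hv'0 : v' 0 = 0)
    (hub : ∀ r : ℝ, 0 ≤ r → u r ≤ c₁ * Real.exp (-Real.sqrt m * r))
    (hvb : ∀ r : ℝ, 0 ≤ r → v r ≤ c₁ * Real.exp (-Real.sqrt m * r))
    (hu'b : ∀ r : ℝ, 0 < r → |u' r| ≤ c₄ * Real.exp (-Real.sqrt m * r))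
    (hv'b : ∀ r : ℝ, 0 < r → |v' r| ≤ c₄ * Real.exp (-Real.sqrt m * r)) :
    ∀ r : ℝ, 0 ≤ r → u r ≤ v r := by
  have hsm : 0 < Real.sqrt m := Real.sqrt_pos.2 hm
  have hcu : ContinuousOn u (Ici 0) := fun r hr => (hud r hr).continuousWithinAt
  have hcv : ContinuousOn v (Ici 0) := fun r hr => (hvd r hr).continuousWithinAt
  have hcu' : ContinuousOn u' (Ici 0) := fun r hr => (hud2 r hr).continuousWithinAt
  have hcv' : ContinuousOn v' (Ici 0) := fun r hr => (hvd2 r hr).continuousWithinAt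
  have hud' : ∀ r : ℝ, 0 < r → HasDerivAt u (u' r) r := fun r hr =>
    (hud r hr.le).hasDerivAt (Ici_mem_nhds hr)
  have hud2' : ∀ r : ℝ, 0 < r → HasDerivAt u' (u'' r) r := fun r hr =>
    (hud2 r hr.le).hasDerivAt (Ici_mem_nhds hr)
  have hvd' : ∀ r : ℝ, 0 < r → HasDerivAt v (v' r) r := fun r hr =>
    (hvd r hr.le).hasDerivAt (Ici_mem_nhds hr)
  have hvd2' : ∀ r : ℝ, 0 < r → HasDerivAt v' (v'' r) r := fun r hr =>
    (hvd2 r hr.le).hasDerivAt (Ici_mem_nhds hr)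
  -- main claim : no crossing point with u > v at a positive radius
  have main : ∀ r₀ : ℝ, 0 < r₀ → ¬ (v r₀ < u r₀) := by
    intro r₀ hr₀ hwpos0
    obtain ⟨w, hwdef⟩ : ∃ w : ℝ → ℝ, w = fun r => u r - v r := ⟨_, rfl⟩
    have hw0 : 0 < w r₀ := by rw [hwdef]; simpa using sub_pos.2 hwpos0
    have hwc : ContinuousOn w (Ici 0) := by rw [hwdef]; exact hcu.sub hcv
    have hwd : ∀ r : ℝ, 0 < r → HasDerivAt w (u' r - v' r) r := by
      intro r hr; rw [hwdef]; exact (hud' r hr).sub (hvd' r hr)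
    obtain ⟨q, hqdef⟩ : ∃ q : ℝ → ℝ,
        q = fun r => r ^ (n - 1) * (u' r * v r - u r * v' r) := ⟨_, rfl⟩
    have hqc : ContinuousOn q (Ici 0) := by
      rw [hqdef]
      exact (continuous_pow (n-1)).continuousOn.mul ((hcu'.mul hcv).sub (hcu.mul hcv'))
    -- derivative of q
    have hqd : ∀ r : ℝ, 0 < r → HasDerivAt q
        (r ^ (n - 1) * (f r (v r) (u r) * u r - f r (u r) (v r) * v r)) r := by
      intro r hr
      rw [hqdef]
      have hW := ((hud2' r hr).mul (hvd' r hr)).sub ((hud' r hr).mul (hvd2' r hr))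
      have h1 := (hasDerivAt_pow (n - 1) r).mul
        (((hud2' r hr).mul (hvd' r hr)).sub ((hud' r hr).mul (hvd2' r hr)))
      have h2 : HasDerivAt (fun y : ℝ => y ^ (n - 1) * (u' y * v y - u y * v' y))
          (((n - 1 : ℕ) : ℝ) * r ^ (n - 1 - 1) * (u' r * v r - u r * v' r)
            + r ^ (n - 1) * ((u'' r * v r + u' r * v' r) - (u' r * v' r + u r * v'' r))) r := h1
      have heq : ((n - 1 : ℕ) : ℝ) * r ^ (n - 1 - 1) * (u' r * v r - u r * v' r)
            + r ^ (n - 1) * ((u'' r * v r + u' r * v' r) - (u' r * v' r + u r * v'' r))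
          = r ^ (n - 1) * (f r (v r) (u r) * u r - f r (u r) (v r) * v r) := by
        rw [pow_aux hn hr]
        have hU : u'' r = -(((n : ℝ) - 1) / r * u' r) - f r (u r) (v r) := by
          have := hequ r hr; linarith
        have hV : v'' r = -(((n : ℝ) - 1) / r * v' r) - f r (v r) (u r) := by
          have := heqv r hr; linarith
        rw [hU, hV]
        ring
      rw [heq] at h2
      exact h2
    -- q tends to zero at infinity
    have hq0 : Tendsto q atTop (𝓝 0) := by
      rw [tendsto_zero_iff_abs_tendsto_zero]
      apply squeeze_zero'
        (g := fun r => 2 * c₁ * c₄ * (r ^ (n - 1) * Real.exp (-(2 * Real.sqrt m) * r)))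
        (Eventually.of_forall (fun r => abs_nonneg _))
      · filter_upwards [eventually_gt_atTop (0:ℝ)] with r hr
        have h1 := hub r hr.le
        have h2 := hvb r hr.le
        have h3 := hu'b r hr
        have h4 := hv'b r hr
        have h5 := (hpos r hr.le).1
        have h6 := (hpos r hr.le).2
        have hE : Real.exp (-(2 * Real.sqrt m) * r)
            = Real.exp (-Real.sqrt m * r) * Real.exp (-Real.sqrt m * r) := by
          rw [← Real.exp_add]; ring_nf
        rw [hqdef]
        simp only
        rw [abs_mul, abs_of_nonneg (by positivity : (0:ℝ) ≤ r ^ (n-1))]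
        have h7 : |u' r * v r - u r * v' r| ≤ |u' r| * v r + u r * |v' r| := by
          calc |u' r * v r - u r * v' r| ≤ |u' r * v r| + |u r * v' r| := abs_sub _ _
            _ = |u' r| * v r + u r * |v' r| := by
                rw [abs_mul, abs_mul, abs_of_pos h6, abs_of_pos h5]
        have h8 : |u' r| * v r + u r * |v' r|
            ≤ 2 * c₁ * c₄ * Real.exp (-(2 * Real.sqrt m) * r) := by
          rw [hE]
          have e1 : |u' r| * v r ≤ (c₄ * Real.exp (-Real.sqrt m * r))
              * (c₁ * Real.exp (-Real.sqrt m * r)) :=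
            mul_le_mul h3 h2 h6.le (by positivity)
          have e2 : u r * |v' r| ≤ (c₁ * Real.exp (-Real.sqrt m * r))
              * (c₄ * Real.exp (-Real.sqrt m * r)) :=
            mul_le_mul h1 h4 (abs_nonneg _) (by positivity)
          nlinarith [Real.exp_pos (-Real.sqrt m * r)]
        calc r ^ (n-1) * |u' r * v r - u r * v' r|
            ≤ r ^ (n-1) * (2 * c₁ * c₄ * Real.exp (-(2 * Real.sqrt m) * r)) :=
              mul_le_mul_of_nonneg_left (le_trans h7 h8) (by positivity)
          _ = 2 * c₁ * c₄ * (r ^ (n-1) * Real.exp (-(2 * Real.sqrt m) * r)) := by ring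
      · have := (poly_exp_decay (n-1) (by positivity : (0:ℝ) < 2 * Real.sqrt m)).const_mul
          (2 * c₁ * c₄)
        rw [mul_zero] at this
        exact this
    -- the left endpoint α of the positivity component of w containing r₀
    obtain ⟨A, hAdef⟩ : ∃ A : Set ℝ, A = {r : ℝ | r ∈ Icc 0 r₀ ∧ w r ≤ 0} := ⟨_, rfl⟩
    have hAclosed : IsClosed A := by
      rw [hAdef]
      have : {r : ℝ | r ∈ Icc 0 r₀ ∧ w r ≤ 0} = Icc 0 r₀ ∩ w ⁻¹' (Iic 0) := by
        ext x; simp [mem_inter_iff]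
      rw [this]
      exact (hwc.mono (fun x (hx : x ∈ Icc 0 r₀) => hx.1)).preimage_isClosed_of_isClosed
        isClosed_Icc isClosed_Iic
    have hqα : ∃ α : ℝ, α ∈ Ico 0 r₀ ∧ 0 ≤ q α ∧ (∀ y, α < y → y ≤ r₀ → 0 < w y) := by
      rcases eq_empty_or_nonempty A with hAe | hAne
      · -- w > 0 on all of [0, r₀]; take α = 0
        refine ⟨0, ⟨le_refl 0, hr₀⟩, ?_, ?_⟩
        · have : q 0 = 0 := by
            rcases Nat.lt_or_ge n 2 with hn2 | hn2
            · have hn1 : n = 1 := by omega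
              rw [hqdef, hn1]
              simp [hu'0, hv'0]
            · have : n - 1 ≠ 0 := by omega
              rw [hqdef]
              simp [zero_pow this]
          linarith [this.ge, this.le]
        · intro y hy hyr
          by_contra hc
          push_neg at hc
          have : y ∈ A := by rw [hAdef]; exact ⟨⟨hy.le, hyr⟩, hc⟩
          rw [hAe] at this
          exact this
      · -- α = sSup A
        obtain ⟨α, hαA⟩ : ∃ α, α = sSup A := ⟨_, rfl⟩
        have hAcpt : IsCompact A := isCompact_Icc.of_isClosed_subset hAclosed
          (by rw [hAdef]; exact fun x hx => hx.1)
        have hαmem : α ∈ A := hαA ▸ hAcpt.sSup_mem hAne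
        have hα0 : 0 ≤ α := by
          rw [hAdef] at hαmem; exact hαmem.1.1
        have hαr₀ : α ≤ r₀ := by
          rw [hAdef] at hαmem; exact hαmem.1.2
        have hwα : w α ≤ 0 := by rw [hAdef] at hαmem; exact hαmem.2
        have hαne : α ≠ r₀ := by
          intro hcon; rw [hcon] at hwα; linarith
        have hαlt : α < r₀ := lt_of_le_of_ne hαr₀ hαne
        have hwy : ∀ y, α < y → y ≤ r₀ → 0 < w y := by
          intro y hy hyr
          by_contra hc
          push_neg at hc
          have hyA : y ∈ A := by
            rw [hAdef]
            refine ⟨⟨?_, hyr⟩, hc⟩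
            linarith
          have : y ≤ α := hαA ▸ le_csSup hAcpt.bddAbove hyA
          linarith
        -- w α = 0 by continuity from the right
        have hwα0 : w α = 0 := by
          have hNB : (𝓝[Ioo α r₀] α).NeBot := left_nhdsWithin_Ioo_neBot hαlt
          have htend : Tendsto w (𝓝[Ioo α r₀] α) (𝓝 (w α)) :=
            ((hwc.continuousWithinAt (mem_Ici.2 hα0)).mono
              (fun y (hy : y ∈ Ioo α r₀) => le_trans hα0 hy.1.le)).tendsto
          have hge : 0 ≤ w α := ge_of_tendsto htend
            (eventually_of_mem self_mem_nhdsWithin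
              (fun y hy => (hwy y hy.1 hy.2.le).le))
          linarith
        -- α > 0 (since w > 0 near 0⁺? no: α could be 0 with w α = 0) — not needed
        refine ⟨α, ⟨hα0, hαlt⟩, ?_, hwy⟩
        -- q α ≥ 0
        rcases eq_or_lt_of_le hα0 with hα0' | hα0'
        · -- α = 0 : q 0 = 0
          have : q 0 = 0 := by
            rcases Nat.lt_or_ge n 2 with hn2 | hn2
            · have hn1 : n = 1 := by omega
              rw [hqdef, hn1]
              simp [hu'0, hv'0]
            · have : n - 1 ≠ 0 := by omega
              rw [hqdef]
              simp [zero_pow this]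
          rw [← hα0']
          linarith [this.le, this.ge]
        · -- α > 0 : q α = α^{n-1} v α (u' α - v' α) with w'(α) ≥ 0
          have hw'α : 0 ≤ u' α - v' α := by
            have hD : HasDerivAt w (u' α - v' α) α := hwd α hα0'
            have hslope := hasDerivAt_iff_tendsto_slope.1 hD
            have hNB : (𝓝[Ioo α r₀] α).NeBot := left_nhdsWithin_Ioo_neBot hαlt
            have hslope' : Tendsto (slope w α) (𝓝[Ioo α r₀] α) (𝓝 (u' α - v' α)) :=
              hslope.mono_left (nhdsWithin_mono _ (fun y hy => ne_of_gt hy.1))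
            apply ge_of_tendsto hslope'
            apply eventually_of_mem self_mem_nhdsWithin
            intro y hy
            have h1 : 0 < w y := hwy y hy.1 hy.2.le
            have h2 : 0 < y - α := sub_pos.2 hy.1
            rw [slope_def_field, hwα0, sub_zero]
            positivity
          have huvα : u α = v α := by
            have : u α - v α = 0 := by rw [hwdef] at hwα0; simpa using hwα0
            linarith
          rw [hqdef]
          simp only
          rw [huvα]
          have : u' α * v α - v α * v' α = v α * (u' α - v' α) := by ring
          rw [this]
          have hvα : 0 < v α := (hpos α hα0).2
          positivity
    obtain ⟨α, hαmem, hqα0, hwy⟩ := hqα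
    -- right endpoint
    obtain ⟨B, hBdef⟩ : ∃ B : Set ℝ, B = {r : ℝ | r₀ ≤ r ∧ w r ≤ 0} := ⟨_, rfl⟩
    have hBclosed : IsClosed B := by
      rw [hBdef]
      have : {r : ℝ | r₀ ≤ r ∧ w r ≤ 0} = Ici r₀ ∩ w ⁻¹' (Iic 0) := by
        ext x; simp [mem_inter_iff]
      rw [this]
      exact (hwc.mono (fun x (hx : x ∈ Ici r₀) => le_trans hr₀.le hx)).preimage_isClosed_of_isClosed
        isClosed_Ici isClosed_Iic
    -- positivity of q' on the component
    have hq'pos : ∀ x : ℝ, α < x → 0 < w x →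
        0 < x ^ (n - 1) * (f x (v x) (u x) * u x - f x (u x) (v x) * v x) := by
      intro x hx hwx
      have hx0 : 0 < x := lt_of_le_of_lt hαmem.1 hx
      have hvx : 0 < v x := (hpos x hx0.le).2
      have hux : v x < u x := by rw [hwdef] at hwx; simp at hwx; linarith
      have := hA3 x hx0 (u x) (v x) hvx hux
      have hxp : (0:ℝ) < x ^ (n-1) := by positivity
      have : 0 < f x (v x) (u x) * u x - f x (u x) (v x) * v x := by linarith
      positivity
    rcases eq_empty_or_nonempty B with hBe | hBne
    · -- w > 0 on [r₀, ∞): q is increasing on [α, ∞) and tends to 0, contradiction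
      have hwy' : ∀ y, α < y → 0 < w y := by
        intro y hy
        rcases le_or_gt y r₀ with h | h
        · exact hwy y hy h
        · by_contra hc
          push_neg at hc
          have : y ∈ B := by rw [hBdef]; exact ⟨h.le, hc⟩
          rw [hBe] at this
          exact this
      have hmono : StrictMonoOn q (Ici α) := by
        apply strictMonoOn_of_deriv_pos (convex_Ici α)
          (hqc.mono (Ici_subset_Ici.2 hαmem.1))
        intro x hx
        rw [interior_Ici] at hx
        have hx0 : 0 < x := lt_of_le_of_lt hαmem.1 hx
        rw [(hqd x hx0).deriv]
        exact hq'pos x hx (hwy' x hx)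
      have hq1 : 0 < q (α + 1) := by
        have := hmono (self_mem_Ici) (by simp : α + 1 ∈ Ici α) (by linarith)
        linarith
      have hev : ∀ᶠ r in atTop, q (α + 1) ≤ q r := by
        filter_upwards [eventually_ge_atTop (α + 1)] with r hr
        rcases eq_or_lt_of_le hr with h | h
        · rw [← h]
        · exact (hmono (by simp : α + 1 ∈ Ici α)
            (show r ∈ Ici α by simp only [mem_Ici]; linarith) h).le
      have : q (α + 1) ≤ 0 := ge_of_tendsto hq0 hev
      linarith
    · -- B nonempty : β = inf B gives a crossing with q β ≤ 0 < q β
      obtain ⟨β, hβB⟩ : ∃ β, β = sInf B := ⟨_, rfl⟩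
      have hBbdd : BddBelow B := by
        rw [hBdef]
        exact ⟨r₀, fun x hx => hx.1⟩
      have hβmem : β ∈ B := hβB ▸ hBclosed.csInf_mem hBne hBbdd
      have hβr₀ : r₀ ≤ β := by rw [hBdef] at hβmem; exact hβmem.1
      have hwβ : w β ≤ 0 := by rw [hBdef] at hβmem; exact hβmem.2
      have hβne : r₀ ≠ β := by
        intro hcon; rw [← hcon] at hwβ; linarith
      have hβgt : r₀ < β := lt_of_le_of_ne hβr₀ hβne
      have hβ0 : 0 < β := lt_trans hr₀ hβgt
      have hwmid : ∀ y, α < y → y < β → 0 < w y := by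
        intro y hy hyβ
        rcases le_or_gt y r₀ with h | h
        · exact hwy y hy h
        · by_contra hc
          push_neg at hc
          have hyB : y ∈ B := by rw [hBdef]; exact ⟨h.le, hc⟩
          have : β ≤ y := hβB ▸ csInf_le hBbdd hyB
          linarith
      -- w β = 0 by continuity from the left
      have hwβ0 : w β = 0 := by
        have hNB : (𝓝[Ioo r₀ β] β).NeBot := right_nhdsWithin_Ioo_neBot hβgt
        have htend : Tendsto w (𝓝[Ioo r₀ β] β) (𝓝 (w β)) :=
          ((hwc.continuousWithinAt (mem_Ici.2 hβ0.le)).mono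
            (fun y (hy : y ∈ Ioo r₀ β) => le_trans hr₀.le hy.1.le)).tendsto
        have hge : 0 ≤ w β := ge_of_tendsto htend
          (eventually_of_mem self_mem_nhdsWithin
            (fun y hy => (hwmid y (lt_trans hαmem.2 hy.1) hy.2).le))
        linarith
      -- q strictly increasing on [α, β]
      have hmono : StrictMonoOn q (Icc α β) := by
        apply strictMonoOn_of_deriv_pos (convex_Icc α β)
          (hqc.mono (fun x hx => le_trans hαmem.1 hx.1))
        intro x hx
        rw [interior_Icc] at hx
        have hx0 : 0 < x := lt_of_le_of_lt hαmem.1 hx.1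
        rw [(hqd x hx0).deriv]
        exact hq'pos x hx.1 (hwmid x hx.1 hx.2)
      have hαβ : α < β := lt_trans hαmem.2 hβgt
      have hqβpos : 0 < q β := by
        have := hmono (⟨le_refl α, hαβ.le⟩ : α ∈ Icc α β)
          (⟨hαβ.le, le_refl β⟩ : β ∈ Icc α β) hαβ
        linarith
      -- but q β ≤ 0 since w'(β) ≤ 0
      have hw'β : u' β - v' β ≤ 0 := by
        have hD : HasDerivAt w (u' β - v' β) β := hwd β hβ0
        have hslope := hasDerivAt_iff_tendsto_slope.1 hD
        have hNB : (𝓝[Ioo r₀ β] β).NeBot := right_nhdsWithin_Ioo_neBot hβgt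
        have hslope' : Tendsto (slope w β) (𝓝[Ioo r₀ β] β) (𝓝 (u' β - v' β)) :=
          hslope.mono_left (nhdsWithin_mono _ (fun y hy => ne_of_lt hy.2))
        apply le_of_tendsto hslope'
        apply eventually_of_mem self_mem_nhdsWithin
        intro y hy
        have h1 : 0 < w y := hwmid y (lt_trans hαmem.2 hy.1) hy.2
        have h2 : y - β < 0 := sub_neg.2 hy.2
        rw [slope_def_field, hwβ0, sub_zero]
        exact le_of_lt (div_neg_of_pos_of_neg h1 h2)
      have huvβ : u β = v β := by
        have : u β - v β = 0 := by rw [hwdef] at hwβ0; simpa using hwβ0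
        linarith
      have hqβle : q β ≤ 0 := by
        rw [hqdef]
        simp only
        rw [huvβ]
        have heq2 : u' β * v β - v β * v' β = v β * (u' β - v' β) := by ring
        rw [heq2]
        have hvβ : 0 < v β := (hpos β hβ0.le).2
        have h1 : v β * (u' β - v' β) ≤ 0 := mul_nonpos_of_nonneg_of_nonpos hvβ.le hw'β
        have h2 : (0:ℝ) ≤ β ^ (n-1) := by positivity
        exact mul_nonpos_of_nonneg_of_nonpos h2 h1
      linarith
  -- conclude for all r ≥ 0, including r = 0 by continuity
  intro r hr
  rcases eq_or_lt_of_le hr with h0 | h0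
  · -- r = 0 : continuity
    by_contra hc
    push_neg at hc
    rw [← h0] at hc
    have hcont : ContinuousWithinAt (fun x => u x - v x) (Ici 0) 0 :=
      ((hcu.sub hcv).continuousWithinAt self_mem_Ici)
    have hev : ∀ᶠ x in 𝓝[Ici (0:ℝ)] 0, 0 < u x - v x :=
      hcont.eventually_const_lt (by linarith : (0:ℝ) < u 0 - v 0)
    have hev2 : ∀ᶠ x in 𝓝[>] (0:ℝ), 0 < u x - v x :=
      hev.filter_mono (nhdsWithin_mono _ Ioi_subset_Ici_self)
    obtain ⟨x, hx1, hx2⟩ := (hev2.and (eventually_mem_nhdsWithin)).exists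
    exact main x hx2 (by linarith)
  · by_contra hc
    push_neg at hc
    exact main r h0 hc

/-- Theorem 1: under (A1), (A2), (A3) every positive solution of the radial system
satisfies `u = v` and decays exponentially with rate `√m`. -/
theorem uniqueness_A1_A2_A3 (n : ℕ) (hn : 1 ≤ n) (f : ℝ → ℝ → ℝ → ℝ)
    (m R ε : ℝ) (hm : 0 < m) (hR : 0 < R) (hε : 0 < ε)
    (hA1 : A1 f)
    (hA2 : ∀ r > R, ∀ z₁ ∈ Set.Ioo 0 ε, ∀ z₂ ∈ Set.Ioo 0 ε, z₁ ≠ z₂ →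
      (f r z₁ z₂ - f r z₂ z₁) / (z₁ - z₂) ≤ -m ∧
      (f r z₁ z₂ + f r z₂ z₁) / (z₁ + z₂) ≤ -m)
    (hA3 : ∀ r > (0:ℝ), ∀ z₁ z₂ : ℝ, 0 < z₂ → z₂ < z₁ →
      f r z₁ z₂ * z₂ < f r z₂ z₁ * z₁)
    (u u' u'' v v' v'' : ℝ → ℝ)
    (hsol : IsPosSol n f u u' u'' v v' v'') :
    (∀ r : ℝ, 0 ≤ r → u r = v r) ∧
    ∃ c > 0, ∀ r > (0:ℝ), u r + |u' r| ≤ c * Real.exp (-Real.sqrt m * r) := by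
  obtain ⟨hu, hv, hpos, hequ, heqv, hu'0, hv'0, hlimu, hlimv⟩ := hsol
  obtain ⟨hud, hud2, hucont2⟩ := hu
  obtain ⟨hvd, hvd2, hvcont2⟩ := hv
  obtain ⟨hcontF, hlip, p, hp, C, hC, hgrow⟩ := hA1
  have hA2s : ∀ r > R, ∀ z₁ ∈ Set.Ioo 0 ε, ∀ z₂ ∈ Set.Ioo 0 ε, z₁ ≠ z₂ →
      (f r z₁ z₂ + f r z₂ z₁) / (z₁ + z₂) ≤ -m :=
    fun r hr z₁ h1 z₂ h2 hne => (hA2 r hr z₁ h1 z₂ h2 hne).2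
  have hA2' := A2sum_ext hm hε hcontF hR hA2s
  obtain ⟨c₁, hc₁, huv⟩ := sum_decay hn hm hε hR hA2' hud hud2 hvd hvd2 hpos hequ heqv
    hlimu hlimv
  have hpos' : ∀ r : ℝ, 0 ≤ r → 0 < v r ∧ 0 < u r :=
    fun r hr => ⟨(hpos r hr).2, (hpos r hr).1⟩
  have huv' : ∀ r : ℝ, 0 ≤ r → v r + u r ≤ c₁ * Real.exp (-Real.sqrt m * r) := by
    intro r hr; have := huv r hr; linarith
  obtain ⟨c₄, hc₄, hu'b⟩ := deriv_decay hn hm hc₁ hp hC hgrow hud hud2 hpos hequ huv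
  obtain ⟨c₅, hc₅, hv'b⟩ := deriv_decay hn hm hc₁ hp hC hgrow hvd hvd2 hpos' heqv huv'
  have hc₆ : 0 < max c₄ c₅ := lt_max_iff.2 (Or.inl hc₄)
  have hu'b6 : ∀ r : ℝ, 0 < r → |u' r| ≤ max c₄ c₅ * Real.exp (-Real.sqrt m * r) := by
    intro r hr
    exact le_trans (hu'b r hr)
      (mul_le_mul_of_nonneg_right (le_max_left _ _) (Real.exp_nonneg _))
  have hv'b6 : ∀ r : ℝ, 0 < r → |v' r| ≤ max c₄ c₅ * Real.exp (-Real.sqrt m * r) := by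
    intro r hr
    exact le_trans (hv'b r hr)
      (mul_le_mul_of_nonneg_right (le_max_right _ _) (Real.exp_nonneg _))
  have hub : ∀ r : ℝ, 0 ≤ r → u r ≤ c₁ * Real.exp (-Real.sqrt m * r) := by
    intro r hr; have := huv r hr; have := (hpos r hr).2; linarith
  have hvb : ∀ r : ℝ, 0 ≤ r → v r ≤ c₁ * Real.exp (-Real.sqrt m * r) := by
    intro r hr; have := huv r hr; have := (hpos r hr).1; linarith
  have h1 := no_cross hn hm hc₁ hc₆ hA3 hud hud2 hvd hvd2 hpos hequ heqv hu'0 hv'0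
    hub hvb hu'b6 hv'b6
  have h2 := no_cross hn hm hc₁ hc₆ hA3 hvd hvd2 hud hud2 hpos' heqv hequ hv'0 hu'0
    hvb hub hv'b6 hu'b6
  constructor
  · exact fun r hr => le_antisymm (h1 r hr) (h2 r hr)
  · refine ⟨c₁ + max c₄ c₅, by positivity, ?_⟩
    intro r hr
    have := hub r hr.le
    have := hu'b6 r hr
    linarith
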